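/- Every snake graph with n tiles has at least n + 1 perfect matchings. -/
import Mathlib


namespace SnakeGraph

/-- A vertex of the square lattice. -/
abbrev Vertex : Type := ℤ × ℤ

/-- An edge of the square lattice: a base vertex together with `true` for a
horizontal edge (from `v` to `v + (1,0)`) or `false` for a vertical edge
(from `v` to `v + (0,1)`). -/
abbrev Edge : Type := Vertex × Bool

/-- The two endpoints of an edge. -/
def endpoints (e : Edge) : Finset Vertex :=
  {e.1, if e.2 then (e.1.1 + 1, e.1.2) else (e.1.1, e.1.2 + 1)}

/-- The gluing direction between two consecutive tiles of a snake graph: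
the north or the east edge of a tile is glued to the south, resp. west,
edge of the next tile. -/
inductive Dir : Type
  | east : Dir
  | north : Dir
deriving DecidableEq

def stepDir : Dir → Vertex
  | .east => (1, 0)
  | .north => (0, 1)

/-- The position (south-west corner) of the `i`-th tile (tiles are 0-indexed),
for the snake graph with gluing directions `d 0, d 1, ...`. -/
def tilePos (d : ℕ → Dir) : ℕ → Vertex
  | 0 => (0, 0)
  | i + 1 => tilePos d i + stepDir (d i)

/-- South edge of the tile with south-west corner `p`. -/
def S (p : Vertex) : Edge := (p, true)

/-- North edge of the tile with south-west corner `p`. -/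
def N (p : Vertex) : Edge := ((p.1, p.2 + 1), true)

/-- West edge of the tile with south-west corner `p`. -/
def W (p : Vertex) : Edge := (p, false)

/-- East edge of the tile with south-west corner `p`. -/
def E (p : Vertex) : Edge := ((p.1 + 1, p.2), false)

/-- The four edges of the tile with south-west corner `p`. -/
def tileEdges (p : Vertex) : Finset Edge := {S p, N p, W p, E p}

/-- The four vertices of the tile with south-west corner `p`. -/
def tileVertices (p : Vertex) : Finset Vertex :=
  {p, (p.1 + 1, p.2), (p.1, p.2 + 1), (p.1 + 1, p.2 + 1)}

/-- The edge set of the sub snake graph consisting of tiles `lo, ..., n-1`. -/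
def edgesFrom (d : ℕ → Dir) (lo n : ℕ) : Finset Edge :=
  (Finset.Ico lo n).biUnion fun i => tileEdges (tilePos d i)

/-- The vertex set of the sub snake graph consisting of tiles `lo, ..., n-1`. -/
def verticesFrom (d : ℕ → Dir) (lo n : ℕ) : Finset Vertex :=
  (Finset.Ico lo n).biUnion fun i => tileVertices (tilePos d i)

/-- The edge set of the snake graph with `n` tiles and gluing directions `d`. -/
def edges (d : ℕ → Dir) (n : ℕ) : Finset Edge := edgesFrom d 0 n

/-- The vertex set of the snake graph with `n` tiles and gluing directions `d`. -/
def vertices (d : ℕ → Dir) (n : ℕ) : Finset Vertex := verticesFrom d 0 n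

/-- The interior (glued) edge `e_i` shared by tiles `i` and `i+1`. -/
def glueEdge (d : ℕ → Dir) (i : ℕ) : Edge :=
  match d i with
  | .east => E (tilePos d i)
  | .north => N (tilePos d i)

/-- `M` is a perfect matching of the graph with vertex set `Vs` and edge set
`Es`: a set of edges covering every vertex exactly once. -/
def IsPM (Vs : Finset Vertex) (Es : Finset Edge) (M : Finset Edge) : Prop :=
  M ⊆ Es ∧ ∀ v ∈ Vs, (M.filter fun e => v ∈ endpoints e).card = 1

/-- `M` is a perfect matching of the snake graph with `n` tiles and gluing
directions `d`. -/
def IsPerfectMatching (d : ℕ → Dir) (n : ℕ) (M : Finset Edge) : Prop :=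
  IsPM (vertices d n) (edges d n) M

/-- A sign function on the snake graph with `n` tiles: on every tile,
`sgn N = sgn W`, `sgn S = sgn E`, and `sgn N ≠ sgn S`
(`true` stands for `+`, `false` for `−`). -/
def IsSignFunction (d : ℕ → Dir) (n : ℕ) (f : Edge → Bool) : Prop :=
  ∀ i < n,
    f (N (tilePos d i)) = f (W (tilePos d i)) ∧
    f (S (tilePos d i)) = f (E (tilePos d i)) ∧
    f (N (tilePos d i)) ≠ f (S (tilePos d i))

/-- A snake graph is zig-zag if no three consecutive tiles are glued in the
same direction. -/
def IsZigZag (d : ℕ → Dir) (n : ℕ) : Prop :=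
  ∀ i, i + 2 < n → d i ≠ d (i + 1)

/-- A snake graph is straight if all gluings are in the same direction. -/
def IsStraight (d : ℕ → Dir) (n : ℕ) : Prop :=
  ∀ i j, i + 1 < n → j + 1 < n → d i = d j

end SnakeGraph

namespace SnakeGraph

variable (d : ℕ → Dir)

/-- level of a vertex -/
def lvl (v : Vertex) : ℤ := v.1 + v.2

lemma tilePos_succ (i : ℕ) : tilePos d (i+1) = tilePos d i + stepDir (d i) := rfl

lemma lvl_tilePos (i : ℕ) : lvl (tilePos d i) = i := by
  induction i with
  | zero => rfl
  | succ i ih =>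
    rw [tilePos_succ]
    cases h : d i <;>
      simp only [lvl, stepDir, Prod.fst_add, Prod.snd_add] <;>
      simp only [lvl] at ih <;> push_cast <;> omega

def Av (t : ℕ) : Vertex := ((tilePos d (t-1)).1 + 1, (tilePos d (t-1)).2)
def Bv (t : ℕ) : Vertex := ((tilePos d (t-1)).1, (tilePos d (t-1)).2 + 1)
def topV (n : ℕ) : Vertex := ((tilePos d (n-1)).1 + 1, (tilePos d (n-1)).2 + 1)

lemma lvl_Av {t : ℕ} (h : 1 ≤ t) : lvl (Av d t) = t := by
  have := lvl_tilePos d (t-1)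
  simp only [lvl, Av] at *
  have : ((t-1 : ℕ) : ℤ) = (t : ℤ) - 1 := by push_cast [h]; ring
  omega

lemma lvl_Bv {t : ℕ} (h : 1 ≤ t) : lvl (Bv d t) = t := by
  have := lvl_tilePos d (t-1)
  simp only [lvl, Bv] at *
  have : ((t-1 : ℕ) : ℤ) = (t : ℤ) - 1 := by push_cast [h]; ring
  omega

lemma lvl_topV {n : ℕ} (h : 1 ≤ n) : lvl (topV d n) = n + 1 := by
  have := lvl_tilePos d (n-1)
  simp only [lvl, topV] at *
  have : ((n-1 : ℕ) : ℤ) = (n : ℤ) - 1 := by push_cast [h]; ring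
  omega

lemma Av_ne_Bv (t : ℕ) : Av d t ≠ Bv d t := by
  simp only [Av, Bv, Prod.ext_iff, ne_eq, not_and]
  intro h; omega



lemma add_pair (p : Vertex) (a b : ℤ) : p + (a, b) = (p.1 + a, p.2 + b) := rfl

/-- `true` iff the glue between tiles `t-1` and `t` is east (meaningful for `t ≥ 1`). -/
def bse (t : ℕ) : Bool :=
  match d (t-1) with
  | .east => true
  | .north => false

/-- Validity of a state sequence. -/
def Valid (X : ℕ → Bool) : Prop :=
  ∀ t, 1 ≤ t → X t ≠ bse d t → X (t+1) = bse d t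

/-- The lower (level `t`) vertex covered by the `t`-th edge. -/
def loV (X : ℕ → Bool) (t : ℕ) : Vertex :=
  if t = 0 then tilePos d 0 else if X t then Av d t else Bv d t

/-- The upper (level `t+1`) vertex covered by the `t`-th edge. -/
def hiV (n : ℕ) (X : ℕ → Bool) (t : ℕ) : Vertex :=
  if t = n then topV d n else if X (t+1) then Bv d (t+1) else Av d (t+1)

lemma lvl_loV (X : ℕ → Bool) (t : ℕ) : lvl (loV d X t) = t := by
  unfold loV
  by_cases h : t = 0
  · simp [h, lvl_tilePos]
  · have h1 : 1 ≤ t := Nat.one_le_iff_ne_zero.mpr h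
    by_cases h2 : X t <;> simp [h, h2, lvl_Av d h1, lvl_Bv d h1]

lemma lvl_hiV {n : ℕ} (hn : 1 ≤ n) (X : ℕ → Bool) (t : ℕ) :
    lvl (hiV d n X t) = t + 1 := by
  unfold hiV
  by_cases h : t = n
  · simp [h, lvl_topV d hn]
  · have h1 : 1 ≤ t + 1 := Nat.le_add_left 1 t
    by_cases h2 : X (t+1) <;> simp [h, h2, lvl_Av d h1, lvl_Bv d h1] <;> push_cast <;> ring

/-- The edge of the matching between levels `t` and `t+1`. -/
def edgeAt (n : ℕ) (X : ℕ → Bool) (t : ℕ) : Edge :=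
  if t = 0 then (if X 1 then W (tilePos d 0) else S (tilePos d 0))
  else if t = n then (if X n then E (tilePos d (n-1)) else N (tilePos d (n-1)))
  else
    match d (t-1), X t, X (t+1) with
    | .east, true, true => W (tilePos d t)
    | .east, true, false => S (tilePos d t)
    | .east, false, _ => N (tilePos d (t-1))
    | .north, false, false => S (tilePos d t)
    | .north, false, true => W (tilePos d t)
    | .north, true, _ => E (tilePos d (t-1))

/-- The matching from a state sequence. -/
def mtch (n : ℕ) (X : ℕ → Bool) : Finset Edge :=
  (Finset.range (n+1)).image (edgeAt d n X)

lemma endpoints_edgeAt {n : ℕ} (hn : 1 ≤ n) {X : ℕ → Bool} (hX : Valid d X)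
    {t : ℕ} (ht : t ≤ n) :
    endpoints (edgeAt d n X t) = {loV d X t, hiV d n X t} := by
  rcases Nat.eq_zero_or_pos t with rfl | htpos
  · have hne : (0:ℕ) ≠ n := by omega
    by_cases h1 : X 1 <;>
      simp [edgeAt, hne, h1, loV, hiV, endpoints, W, S, Av, Bv, tilePos]
  · obtain ⟨s, rfl⟩ : ∃ s, t = s + 1 := ⟨t - 1, by omega⟩
    by_cases hts : s + 1 = n
    · subst hts
      by_cases h1 : X (s+1) <;>
        simp [edgeAt, h1, loV, hiV, endpoints, E, N, Av, Bv, topV]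
    · have hlt : s + 1 < n := by omega
      have hst : s + 1 - 1 = s := by omega
      have hst2 : s + 2 - 1 = s + 1 := by omega
      cases hd : d s with
      | east =>
        have hb : bse d (s+1) = true := by simp [bse, hst, hd]
        by_cases h1 : X (s+1) <;> by_cases h2 : X (s+2)
        · simp [edgeAt, hts, hst, hd, h1, h2, loV, hiV, endpoints, W, Av, Bv,
            tilePos_succ, stepDir, add_pair, Prod.ext_iff]
        · simp [edgeAt, hts, hst, hd, h1, h2, loV, hiV, endpoints, S, Av, Bv,
            tilePos_succ, stepDir, add_pair, Prod.ext_iff]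
        · simp [edgeAt, hts, hst, hd, h1, h2, loV, hiV, endpoints, N, Av, Bv,
            tilePos_succ, stepDir, add_pair, Prod.ext_iff]
        · exfalso
          have := hX (s+1) (by omega) (by simp [hb, h1])
          rw [hb] at this
          simp [h2] at this
      | north =>
        have hb : bse d (s+1) = false := by simp [bse, hst, hd]
        by_cases h1 : X (s+1) <;> by_cases h2 : X (s+2)
        · exfalso
          have := hX (s+1) (by omega) (by simp [hb, h1])
          rw [hb] at this
          simp [h2] at this
        · simp [edgeAt, hts, hst, hd, h1, h2, loV, hiV, endpoints, E, Av, Bv,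
            tilePos_succ, stepDir, add_pair, Prod.ext_iff]
        · simp [edgeAt, hts, hst, hd, h1, h2, loV, hiV, endpoints, W, Av, Bv,
            tilePos_succ, stepDir, add_pair, Prod.ext_iff]
        · simp [edgeAt, hts, hst, hd, h1, h2, loV, hiV, endpoints, S, Av, Bv,
            tilePos_succ, stepDir, add_pair, Prod.ext_iff]

lemma mem_edges {n i : ℕ} (hi : i < n) {e : Edge} (he : e ∈ tileEdges (tilePos d i)) :
    e ∈ edges d n := by
  simp only [edges, edgesFrom, Finset.mem_biUnion]
  exact ⟨i, by simp [Finset.mem_Ico]; omega, he⟩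

lemma mtch_subset {n : ℕ} (hn : 1 ≤ n) (X : ℕ → Bool) : mtch d n X ⊆ edges d n := by
  intro e he
  simp only [mtch, Finset.mem_image, Finset.mem_range] at he
  obtain ⟨t, ht, rfl⟩ := he
  rcases Nat.eq_zero_or_pos t with rfl | htpos
  · have hne : (0:ℕ) ≠ n := by omega
    by_cases h1 : X 1 <;>
      [ exact mem_edges d hn (by simp [edgeAt, hne, h1, tileEdges]);
        exact mem_edges d hn (by simp [edgeAt, hne, h1, tileEdges]) ]
  · obtain ⟨s, rfl⟩ : ∃ s, t = s + 1 := ⟨t - 1, by omega⟩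
    by_cases hts : s + 1 = n
    · subst hts
      have hlt : s < s + 1 := by omega
      by_cases h1 : X (s+1) <;>
        [ exact mem_edges d hlt (by simp [edgeAt, h1, tileEdges]);
          exact mem_edges d hlt (by simp [edgeAt, h1, tileEdges]) ]
    · have hlt : s + 1 < n := by omega
      have hst : s + 1 - 1 = s := by omega
      cases hd : d s <;> by_cases h1 : X (s+1) <;> by_cases h2 : X (s+2) <;>
        [ exact mem_edges d hlt (by simp [edgeAt, hts, hst, hd, h1, h2, tileEdges]);
          exact mem_edges d hlt (by simp [edgeAt, hts, hst, hd, h1, h2, tileEdges]);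
          exact mem_edges d (show s < n by omega) (by simp [edgeAt, hts, hst, hd, h1, h2, tileEdges]);
          exact mem_edges d (show s < n by omega) (by simp [edgeAt, hts, hst, hd, h1, h2, tileEdges]);
          exact mem_edges d (show s < n by omega) (by simp [edgeAt, hts, hst, hd, h1, h2, tileEdges]);
          exact mem_edges d (show s < n by omega) (by simp [edgeAt, hts, hst, hd, h1, h2, tileEdges]);
          exact mem_edges d hlt (by simp [edgeAt, hts, hst, hd, h1, h2, tileEdges]);
          exact mem_edges d hlt (by simp [edgeAt, hts, hst, hd, h1, h2, tileEdges]) ]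

lemma vertex_class {n : ℕ} (hn : 1 ≤ n) {v : Vertex} (hv : v ∈ vertices d n) :
    v = tilePos d 0 ∨ (∃ t, 1 ≤ t ∧ t ≤ n ∧ (v = Av d t ∨ v = Bv d t)) ∨ v = topV d n := by
  simp only [vertices, verticesFrom, Finset.mem_biUnion, Finset.mem_Ico] at hv
  obtain ⟨i, ⟨-, hi⟩, hv⟩ := hv
  simp only [tileVertices, Finset.mem_insert, Finset.mem_singleton] at hv
  rcases hv with rfl | rfl | rfl | rfl
  · -- v = tilePos d i
    rcases Nat.eq_zero_or_pos i with rfl | hipos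
    · left; rfl
    · right; left
      obtain ⟨j, rfl⟩ : ∃ j, i = j + 1 := ⟨i - 1, by omega⟩
      refine ⟨j + 1, by omega, by omega, ?_⟩
      cases hd : d j with
      | east => left; simp [Av, tilePos_succ, hd, stepDir, add_pair]
      | north => right; simp [Bv, tilePos_succ, hd, stepDir, add_pair]
  · right; left
    exact ⟨i + 1, by omega, by omega, Or.inl (by simp [Av])⟩
  · right; left
    exact ⟨i + 1, by omega, by omega, Or.inr (by simp [Bv])⟩
  · by_cases hin : i = n - 1
    · right; right
      simp [topV, hin]
    · right; left
      refine ⟨i + 2, by omega, by omega, ?_⟩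
      cases hd : d i with
      | north => left; simp [Av, tilePos_succ, hd, stepDir, add_pair]
      | east => right; simp [Bv, tilePos_succ, hd, stepDir, add_pair]


lemma endpoint_cases {n : ℕ} (hn : 1 ≤ n) {X : ℕ → Bool} (hX : Valid d X)
    {v : Vertex} {s : ℕ} (hs : s ≤ n) (hv : v ∈ endpoints (edgeAt d n X s)) :
    (v = loV d X s ∧ lvl v = s) ∨ (v = hiV d n X s ∧ lvl v = s + 1) := by
  rw [endpoints_edgeAt d hn hX hs] at hv
  simp only [Finset.mem_insert, Finset.mem_singleton] at hv
  rcases hv with rfl | rfl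
  · exact Or.inl ⟨rfl, lvl_loV d X s⟩
  · exact Or.inr ⟨rfl, by exact_mod_cast lvl_hiV d hn X s⟩

lemma cover {n : ℕ} (hn : 1 ≤ n) {X : ℕ → Bool} (hX : Valid d X) :
    ∀ v ∈ vertices d n, ((mtch d n X).filter fun e => v ∈ endpoints e).card = 1 := by
  intro v hv
  suffices h : ∃ tv, tv ≤ n ∧ v ∈ endpoints (edgeAt d n X tv) ∧
      ∀ s, s ≤ n → v ∈ endpoints (edgeAt d n X s) → s = tv by
    obtain ⟨tv, htv, hvin, huniq⟩ := h
    have hset : (mtch d n X).filter (fun e => v ∈ endpoints e) = {edgeAt d n X tv} := by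
      ext e
      simp only [Finset.mem_filter, mtch, Finset.mem_image, Finset.mem_range,
        Finset.mem_singleton]
      constructor
      · rintro ⟨⟨s, hs, rfl⟩, hve⟩
        rw [huniq s (by omega) hve]
      · rintro rfl
        exact ⟨⟨tv, by omega, rfl⟩, hvin⟩
    rw [hset, Finset.card_singleton]
  have hmem : ∀ t, t ≤ n → endpoints (edgeAt d n X t) = {loV d X t, hiV d n X t} :=
    fun t ht => endpoints_edgeAt d hn hX ht
  rcases vertex_class d hn hv with rfl | ⟨t, ht1, ht2, hAB⟩ | rfl
  · -- v = tilePos d 0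
    refine ⟨0, by omega, ?_, ?_⟩
    · rw [hmem 0 (by omega)]
      have : loV d X 0 = tilePos d 0 := by simp [loV]
      simp [← this]
    · intro s hs hvs
      have hl : lvl (tilePos d 0) = 0 := lvl_tilePos d 0
      rcases endpoint_cases d hn hX hs hvs with ⟨-, h⟩ | ⟨-, h⟩ <;> omega
  · -- v = Av t or Bv t
    have htn : t - 1 ≠ n := by omega
    have ht1' : (t - 1) + 1 = t := by omega
    have hlv : lvl v = t := by
      rcases hAB with rfl | rfl
      · exact lvl_Av d ht1
      · exact lvl_Bv d ht1
    have hloV : loV d X t = if X t then Av d t else Bv d t := by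
      simp [loV, show t ≠ 0 by omega]
    have hhiV : hiV d n X (t-1) = if X t then Bv d t else Av d t := by
      simp [hiV, htn, ht1']
    rcases hAB with rfl | rfl <;> rcases hxt : X t with _ | _
    · -- v = Av t, X t = false : covered from below, tv = t - 1
      refine ⟨t - 1, by omega, ?_, ?_⟩
      · rw [hmem (t-1) (by omega), hhiV, hxt]
        simp
      · intro s hs hvs
        rcases endpoint_cases d hn hX hs hvs with ⟨he, h⟩ | ⟨-, h⟩
        · exfalso
          have hst : s = t := by omega
          rw [hst, hloV, hxt] at he
          simp at he
          exact Av_ne_Bv d t he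
        · omega
    · -- v = Av t, X t = true : covered from above, tv = t
      refine ⟨t, ht2, ?_, ?_⟩
      · rw [hmem t ht2, hloV, hxt]
        simp
      · intro s hs hvs
        rcases endpoint_cases d hn hX hs hvs with ⟨-, h⟩ | ⟨he, h⟩
        · omega
        · exfalso
          have hst : s = t - 1 := by omega
          rw [hst, hhiV, hxt] at he
          simp at he
          exact Av_ne_Bv d t he
    · -- v = Bv t, X t = false : tv = t
      refine ⟨t, ht2, ?_, ?_⟩
      · rw [hmem t ht2, hloV, hxt]
        simp
      · intro s hs hvs
        rcases endpoint_cases d hn hX hs hvs with ⟨-, h⟩ | ⟨he, h⟩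
        · omega
        · exfalso
          have hst : s = t - 1 := by omega
          rw [hst, hhiV, hxt] at he
          simp at he
          exact Av_ne_Bv d t he.symm
    · -- v = Bv t, X t = true : tv = t - 1
      refine ⟨t - 1, by omega, ?_, ?_⟩
      · rw [hmem (t-1) (by omega), hhiV, hxt]
        simp
      · intro s hs hvs
        rcases endpoint_cases d hn hX hs hvs with ⟨he, h⟩ | ⟨-, h⟩
        · exfalso
          have hst : s = t := by omega
          rw [hst, hloV, hxt] at he
          simp at he
          exact Av_ne_Bv d t he.symm
        · omega
  · -- v = topV d n
    refine ⟨n, le_refl n, ?_, ?_⟩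
    · rw [hmem n (le_refl n)]
      have : hiV d n X n = topV d n := by simp [hiV]
      simp [← this]
    · intro s hs hvs
      have hl : lvl (topV d n) = n + 1 := lvl_topV d hn
      rcases endpoint_cases d hn hX hs hvs with ⟨-, h⟩ | ⟨-, h⟩ <;> omega

theorem mtch_isPM {n : ℕ} (hn : 1 ≤ n) {X : ℕ → Bool} (hX : Valid d X) :
    IsPerfectMatching d n (mtch d n X) :=
  ⟨mtch_subset d hn X, cover d hn hX⟩


lemma decode {n : ℕ} (hn : 1 ≤ n) {X : ℕ → Bool} (hX : Valid d X)
    {t : ℕ} (h1 : 1 ≤ t) (h2 : t ≤ n) :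
    X t = true ↔ ∃ e ∈ mtch d n X, Av d t ∈ endpoints e ∧
      ∃ w ∈ endpoints e, lvl w = (t : ℤ) + 1 := by
  constructor
  · intro hx
    refine ⟨edgeAt d n X t, ?_, ?_, hiV d n X t, ?_, ?_⟩
    · simp only [mtch, Finset.mem_image, Finset.mem_range]
      exact ⟨t, by omega, rfl⟩
    · rw [endpoints_edgeAt d hn hX h2]
      have : loV d X t = Av d t := by simp [loV, show t ≠ 0 by omega, hx]
      simp [← this]
    · rw [endpoints_edgeAt d hn hX h2]; simp
    · exact_mod_cast lvl_hiV d hn X t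
  · rintro ⟨e, he, hAv, w, hw, hlw⟩
    simp only [mtch, Finset.mem_image, Finset.mem_range] at he
    obtain ⟨s, hs, rfl⟩ := he
    have hs' : s ≤ n := by omega
    have hlA : lvl (Av d t) = t := lvl_Av d h1
    have hst : s = t := by
      rcases endpoint_cases d hn hX hs' hAv with ⟨-, hA⟩ | ⟨-, hA⟩
      · omega
      · exfalso
        have hst1 : s + 1 = t := by omega
        rcases endpoint_cases d hn hX hs' hw with ⟨-, hW⟩ | ⟨-, hW⟩ <;> omega
    subst hst
    rcases endpoint_cases d hn hX hs' hAv with ⟨hA, -⟩ | ⟨-, hA⟩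
    · rw [loV, if_neg (show ¬ s = 0 by omega)] at hA
      by_contra hx
      rw [if_neg hx] at hA
      exact Av_ne_Bv d s hA
    · omega

/-- The family of `n+1` state sequences. -/
def phi (j t : ℕ) : Bool :=
  if t < j ∨ j = 0 then bse d t else if t = j then !(bse d t) else bse d (t-1)

lemma phi_valid (j : ℕ) : Valid d (phi d j) := by
  intro t ht hne
  by_cases hj : j = 0
  · exfalso; exact hne (by simp [phi, hj])
  · have htj : ¬ t < j := by
      intro h
      exact hne (by simp [phi, h])
    have h1 : ¬ (t + 1 < j ∨ j = 0) := by omega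
    have h2 : ¬ t + 1 = j := by omega
    simp [phi, h1, h2]

lemma phi_self {k : ℕ} (hk : 1 ≤ k) : phi d k k = !(bse d k) := by
  unfold phi
  rw [if_neg (by omega), if_pos rfl]

lemma phi_lt {j k : ℕ} (h : k < j ∨ j = 0) : phi d j k = bse d k := by
  unfold phi
  rw [if_pos h]

lemma phi_ne {n j k : ℕ} (hjk : j < k) (hk : k ≤ n) :
    ∃ t, 1 ≤ t ∧ t ≤ n ∧ phi d j t ≠ phi d k t := by
  by_cases hj : j = 0
  · refine ⟨k, by omega, hk, ?_⟩
    rw [phi_lt d (Or.inr hj), phi_self d (by omega)]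
    cases bse d k <;> simp
  · refine ⟨j, by omega, by omega, ?_⟩
    rw [phi_self d (by omega), phi_lt d (Or.inl hjk)]
    cases bse d j <;> simp

lemma mtch_inj {n : ℕ} (hn : 1 ≤ n) {X Y : ℕ → Bool} (hX : Valid d X) (hY : Valid d Y)
    (h : mtch d n X = mtch d n Y) : ∀ t, 1 ≤ t → t ≤ n → X t = Y t := by
  intro t h1 h2
  have hx := decode d hn hX h1 h2
  have hy := decode d hn hY h1 h2
  rw [h] at hx
  have : X t = true ↔ Y t = true := hx.trans hy.symm
  cases hxt : X t <;> cases hyt : Y t <;> simp [hxt, hyt] at this ⊢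


end SnakeGraph

open SnakeGraph in
/-- Every snake graph with `n` tiles has at least `n + 1` perfect matchings. -/
theorem snakeGraph_card_perfectMatchings_ge (d : ℕ → Dir) (n : ℕ)
    (hn : 1 ≤ n) :
    n + 1 ≤ Nat.card {M : Finset Edge // IsPerfectMatching d n M} := by
  classical
  have hfin : Finite {M : Finset Edge // IsPerfectMatching d n M} := by
    refine Finite.of_injective
      (fun M : {M : Finset Edge // IsPerfectMatching d n M} =>
        (⟨M.1, Finset.mem_powerset.mpr M.2.1⟩ : {M : Finset Edge // M ∈ (edges d n).powerset}))
      ?_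
    intro a b hab
    simpa [Subtype.ext_iff] using hab
  set F : Fin (n+1) → {M : Finset Edge // IsPerfectMatching d n M} :=
    fun k => ⟨mtch d n (phi d k), mtch_isPM d hn (phi_valid d k)⟩ with hFdef
  have hF : Function.Injective F := by
    intro a b hab
    by_contra hne
    have hne' : (a : ℕ) ≠ (b : ℕ) := fun h => hne (Fin.ext h)
    have hmm : mtch d n (phi d a) = mtch d n (phi d b) :=
      congrArg Subtype.val hab
    rcases Nat.lt_or_ge (a : ℕ) (b : ℕ) with hlt | hge
    · obtain ⟨t, ht1, ht2, htne⟩ := phi_ne d hlt (by omega : (b:ℕ) ≤ n)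
      exact htne (mtch_inj d hn (phi_valid d a) (phi_valid d b) hmm t ht1 ht2)
    · have hlt : (b : ℕ) < (a : ℕ) := by omega
      obtain ⟨t, ht1, ht2, htne⟩ := phi_ne d hlt (by omega : (a:ℕ) ≤ n)
      exact htne (mtch_inj d hn (phi_valid d b) (phi_valid d a) hmm.symm t ht1 ht2)
  calc n + 1 = Nat.card (Fin (n+1)) := by simp
    _ ≤ Nat.card {M : Finset Edge // IsPerfectMatching d n M} :=
        Nat.card_le_card_of_injective F hF
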